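/- If a preordered space has a Debreu separable countable subset (i.e., for all x ≺ y there exists d in the countable set with x ≼ d ≼ y), then the preorder admits a strict monotone, i.e., a real-valued function f with x ≼ y implying f(x) ≤ f(y) and x ≺ y implying f(x) < f(y). -/
import Mathlib


/-- A Debreu separable preorder admits a strict monotone. -/
theorem debreu_separable_has_strict_monotone {X : Type*} (le : X → X → Prop)
    (hrefl : ∀ x, le x x) (htrans : ∀ x y z, le x y → le y z → le x z)
    (D : Set X) (hD : D.Countable)
    (hdense : ∀ x y, le x y → ¬ le y x → ∃ d ∈ D, le x d ∧ le d y) :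
    ∃ f : X → ℝ, (∀ x y, le x y → f x ≤ f y) ∧
      (∀ x y, le x y → ¬ le y x → f x < f y) := by
  classical
  rcases D.eq_empty_or_nonempty with hDe | hDn
  · refine ⟨fun _ => 0, fun _ _ _ => le_rfl, fun x y hxy hyx => ?_⟩
    obtain ⟨d, hd, -⟩ := hdense x y hxy hyx
    simp [hDe] at hd
  obtain ⟨d, rfl⟩ := hD.exists_eq_range hDn
  set A : X → ℕ → ℝ := fun x n => if le (d n) x then (1/2 : ℝ)^n else 0 with hA
  set B : X → ℕ → ℝ := fun x n => if le x (d n) then (1/2 : ℝ)^n else 0 with hB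
  have hsumA : ∀ x, Summable (A x) := by
    intro x
    apply Summable.of_nonneg_of_le (fun n => ?_) (fun n => ?_) summable_geometric_two
    · simp only [hA]; split <;> positivity
    · simp only [hA, one_div]; split
      · exact le_rfl
      · positivity
  have hsumB : ∀ x, Summable (B x) := by
    intro x
    apply Summable.of_nonneg_of_le (fun n => ?_) (fun n => ?_) summable_geometric_two
    · simp only [hB]; split <;> positivity
    · simp only [hB, one_div]; split
      · exact le_rfl
      · positivity
  refine ⟨fun x => (∑' n, A x n) - (∑' n, B x n), ?_, ?_⟩
  · intro x y hxy
    have h1 : ∀ n, A x n ≤ A y n := by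
      intro n; simp only [hA]
      split
      · rw [if_pos (htrans _ _ _ ‹_› hxy)]
      · split <;> positivity
    have h2 : ∀ n, B y n ≤ B x n := by
      intro n; simp only [hB]
      split
      · rw [if_pos (htrans _ _ _ hxy ‹_›)]
      · split <;> positivity
    exact sub_le_sub (Summable.tsum_le_tsum h1 (hsumA x) (hsumA y))
      (Summable.tsum_le_tsum h2 (hsumB y) (hsumB x))
  · intro x y hxy hyx
    obtain ⟨e, he, hxe, hey⟩ := hdense x y hxy hyx
    obtain ⟨n, rfl⟩ := he
    have h1 : ∀ m, A x m ≤ A y m := by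
      intro m; simp only [hA]
      split
      · rw [if_pos (htrans _ _ _ ‹_› hxy)]
      · split <;> positivity
    have h2 : ∀ m, B y m ≤ B x m := by
      intro m; simp only [hB]
      split
      · rw [if_pos (htrans _ _ _ hxy ‹_›)]
      · split <;> positivity
    have hpos : (0:ℝ) < (1/2)^n := by positivity
    by_cases hdx : le (d n) x
    · have hBx : B x n = (1/2)^n := by simp only [hB]; exact if_pos hxe
      have hBy : B y n = 0 := by
        simp only [hB]
        exact if_neg (fun h => hyx (htrans _ _ _ h hdx))
      have hB' : B y n < B x n := by rw [hBx, hBy]; exact hpos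
      have := Summable.tsum_lt_tsum h2 hB' (hsumB y) (hsumB x)
      have hAle := Summable.tsum_le_tsum h1 (hsumA x) (hsumA y)
      dsimp only; linarith
    · have hAx : A x n = 0 := by simp only [hA]; exact if_neg hdx
      have hAy : A y n = (1/2)^n := by simp only [hA]; exact if_pos hey
      have hA' : A x n < A y n := by rw [hAx, hAy]; exact hpos
      have := Summable.tsum_lt_tsum h1 hA' (hsumA x) (hsumA y)
      have hBle := Summable.tsum_le_tsum h2 (hsumB y) (hsumB x)
      dsimp only; linarith
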